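/- The function g₁(z; α) = (4 + 8α²z² + α⁴z⁴) e^{-z}/(C₂(α)(1 + e^{-z})^2) is a probability density on ℝ for every real α, where C₂(α) = 4 + 8π²α²/3 + 7π⁴α⁴/15; moreover it is symmetric: g₁(-z; α) = g₁(z; α). -/

import Mathlib

open Real MeasureTheory Set Filter Topology

noncomputable def C₂ (α : ℝ) : ℝ := 4 + 8 * π ^ 2 * α ^ 2 / 3 + 7 * π ^ 4 * α ^ 4 / 15

noncomputable def g₁ (z α : ℝ) : ℝ :=
  (4 + 8 * α ^ 2 * z ^ 2 + α ^ 4 * z ^ 4) * Real.exp (-z) / (C₂ α * (1 + Real.exp (-z)) ^ 2)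

/-! ### Auxiliary material -/

noncomputable def SCB.w (t : ℝ) : ℝ := Real.exp (-t) / (1 + Real.exp (-t)) ^ 2

namespace SCB

lemma w_even (t : ℝ) : w (-t) = w t := by
  unfold w
  rw [neg_neg, Real.exp_neg]
  have h := (Real.exp_pos t).ne'
  field_simp
  ring

lemma w_nonneg (t : ℝ) : 0 ≤ w t := by unfold w; positivity

lemma w_cont : Continuous w := by
  apply Continuous.div
  · exact Real.continuous_exp.comp continuous_neg
  · fun_prop
  · intro t
    positivity

lemma w_le_exp (t : ℝ) : w t ≤ Real.exp (-t) := by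
  unfold w
  rw [div_le_iff₀ (by positivity)]
  nlinarith [Real.exp_pos (-t), sq_nonneg (Real.exp (-t))]

lemma hasSum_w {z : ℝ} (hz : 0 < z) :
    HasSum (fun n : ℕ => (-1 : ℝ) ^ (n + 1) * (n * Real.exp (-(n * z)))) (w z) := by
  have hx : ‖-Real.exp (-z)‖ < 1 := by
    rw [norm_neg, Real.norm_eq_abs, abs_of_pos (Real.exp_pos _)]
    exact Real.exp_lt_one_iff.2 (by linarith)
  have h2 := (hasSum_coe_mul_geometric_of_norm_lt_one (𝕜 := ℝ) hx).neg
  have key : ∀ n : ℕ, (-1 : ℝ) ^ (n + 1) * (n * Real.exp (-(n * z)))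
      = -((n : ℝ) * (-Real.exp (-z)) ^ n) := by
    intro n
    rw [show -((n : ℝ) * z) = n * (-z) by ring, Real.exp_nat_mul, neg_pow, pow_succ]
    ring
  have hval : w z = -(-Real.exp (-z) / (1 - -Real.exp (-z)) ^ 2) := by
    unfold w
    rw [show (1 : ℝ) - -Real.exp (-z) = 1 + Real.exp (-z) by ring]
    ring
  rw [hval]
  simp only [key]
  exact h2

lemma integral_pow_exp {k : ℕ} {c : ℝ} (hc : 0 < c) :
    ∫ t in Ioi (0:ℝ), t ^ k * Real.exp (-(c * t)) = k.factorial / c ^ (k + 1) := by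
  have h := integral_rpow_mul_exp_neg_mul_Ioi (a := (k : ℝ) + 1) (r := c)
    (by positivity) hc
  rw [show ((k : ℝ) + 1 - 1) = (k : ℝ) by ring] at h
  simp_rw [Real.rpow_natCast] at h
  rw [h, Real.Gamma_nat_eq_factorial, show ((k : ℝ) + 1) = ((k + 1 : ℕ) : ℝ) by push_cast; ring,
    Real.rpow_natCast]
  field_simp
  rw [← mul_pow, one_div, inv_mul_cancel₀ hc.ne', one_pow]

lemma integrableOn_pow_exp {k : ℕ} {c : ℝ} (hc : 0 < c) :
    IntegrableOn (fun t : ℝ => t ^ k * Real.exp (-(c * t))) (Ioi 0) := by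
  have h := integrableOn_rpow_mul_exp_neg_mul_rpow (p := 1) (s := (k : ℝ)) (b := c)
    (lt_of_lt_of_le neg_one_lt_zero (Nat.cast_nonneg k)) one_pos hc
  refine h.congr_fun (fun t ht => ?_) measurableSet_Ioi
  beta_reduce
  rw [Real.rpow_one, Real.rpow_natCast, neg_mul]

lemma integrableOn_pow_w (k : ℕ) : IntegrableOn (fun t : ℝ => t ^ k * w t) (Ioi 0) := by
  refine Integrable.mono (integrableOn_pow_exp (k := k) (c := 1) one_pos)
    (((continuous_pow k).mul w_cont).aestronglyMeasurable) ?_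
  refine (ae_restrict_iff' measurableSet_Ioi).2 (Filter.Eventually.of_forall fun t ht => ?_)
  have ht' : 0 < t := ht
  simp only [Real.norm_eq_abs, abs_mul, abs_pow, one_mul]
  rw [abs_of_nonneg (w_nonneg t), abs_of_pos (Real.exp_pos _), abs_of_pos ht']
  exact mul_le_mul_of_nonneg_left (w_le_exp t) (pow_nonneg ht'.le k)

lemma integral_w_Ioi : ∫ t in Ioi (0:ℝ), w t = 1 / 2 := by
  have hderiv : ∀ x ∈ Ici (0:ℝ), HasDerivAt (fun t => (1 + Real.exp (-t))⁻¹) (w x) x := by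
    intro x _
    have h1 : HasDerivAt (fun t : ℝ => 1 + Real.exp (-t)) (-Real.exp (-x)) x := by
      have := (Real.hasDerivAt_exp (-x)).comp x (hasDerivAt_neg x)
      simpa using this.const_add 1
    have h2 := h1.inv (by positivity)
    refine h2.congr_deriv ?_
    unfold w
    ring
  have htend : Tendsto (fun t : ℝ => (1 + Real.exp (-t))⁻¹) atTop (𝓝 1) := by
    have h0 : Tendsto (fun t : ℝ => Real.exp (-t)) atTop (𝓝 0) :=
      Real.tendsto_exp_neg_atTop_nhds_zero
    have := (tendsto_const_nhds (x := (1:ℝ)).add h0).inv₀ (by norm_num)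
    simpa using this
  have := integral_Ioi_of_hasDerivAt_of_tendsto' hderiv
    ((integrableOn_pow_w 0).congr_fun (fun t _ => by simp) measurableSet_Ioi) htend
  rw [this]
  norm_num

lemma hasSum_eta {k : ℕ} {S : ℝ}
    (hζ : HasSum (fun n : ℕ => 1 / (n : ℝ) ^ k) S) :
    HasSum (fun n : ℕ => (-1 : ℝ) ^ (n + 1) * (1 / (n : ℝ) ^ k))
      ((1 - 2 / 2 ^ k) * S) := by
  have hfe : ∀ m : ℕ, (1 : ℝ) / ((2 * m : ℕ) : ℝ) ^ k = (1 / 2 ^ k) * (1 / (m : ℝ) ^ k) := by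
    intro m
    push_cast
    rw [mul_pow, div_mul_div_comm, one_mul]
  have he : HasSum (fun m : ℕ => 1 / ((2 * m : ℕ) : ℝ) ^ k) ((1 / 2 ^ k) * S) := by
    simp only [hfe]
    exact hζ.mul_left _
  have hinj : Function.Injective (fun m : ℕ => 2 * m + 1) := fun a b h => by simpa using h
  have ho : HasSum (fun m : ℕ => 1 / ((2 * m + 1 : ℕ) : ℝ) ^ k)
      (∑' m : ℕ, 1 / ((2 * m + 1 : ℕ) : ℝ) ^ k) :=
    (hζ.summable.comp_injective hinj).hasSum
  have htot := HasSum.even_add_odd (f := fun n : ℕ => 1 / (n : ℝ) ^ k) he ho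
  have hT : (∑' m : ℕ, 1 / ((2 * m + 1 : ℕ) : ℝ) ^ k) = S - (1 / 2 ^ k) * S := by
    have := hζ.unique htot
    linarith
  rw [hT] at ho
  have hge : HasSum (fun m : ℕ => (-1 : ℝ) ^ (2 * m + 1) * (1 / ((2 * m : ℕ) : ℝ) ^ k))
      (-((1 / 2 ^ k) * S)) := by
    have : ∀ m : ℕ, (-1 : ℝ) ^ (2 * m + 1) * (1 / ((2 * m : ℕ) : ℝ) ^ k)
        = -(1 / ((2 * m : ℕ) : ℝ) ^ k) := by
      intro m
      rw [Odd.neg_one_pow ⟨m, by ring⟩]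
      ring
    simp only [this]
    exact he.neg
  have hgo : HasSum (fun m : ℕ => (-1 : ℝ) ^ (2 * m + 1 + 1) * (1 / ((2 * m + 1 : ℕ) : ℝ) ^ k))
      (S - (1 / 2 ^ k) * S) := by
    have : ∀ m : ℕ, (-1 : ℝ) ^ (2 * m + 1 + 1) * (1 / ((2 * m + 1 : ℕ) : ℝ) ^ k)
        = 1 / ((2 * m + 1 : ℕ) : ℝ) ^ k := by
      intro m
      rw [Even.neg_one_pow ⟨m + 1, by ring⟩]
      ring
    simp only [this]
    exact ho
  have := HasSum.even_add_odd
    (f := fun n : ℕ => (-1 : ℝ) ^ (n + 1) * (1 / (n : ℝ) ^ k)) hge hgo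
  convert this using 1
  ring

lemma integral_pow_w {k : ℕ} (hk : 1 ≤ k) {S : ℝ}
    (hζ : HasSum (fun n : ℕ => 1 / (n : ℝ) ^ k) S) :
    ∫ t in Ioi (0:ℝ), t ^ k * w t = k.factorial * ((1 - 2 / 2 ^ k) * S) := by
  set F : ℕ → ℝ → ℝ := fun n t => (-1 : ℝ) ^ (n + 1) * ((n : ℝ) * (t ^ k * Real.exp (-(n * t))))
    with hF
  have hF0 : F 0 = fun _ => 0 := by funext t; simp [hF]
  have hF_int : ∀ n : ℕ, Integrable (F n) (volume.restrict (Ioi 0)) := by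
    intro n
    rcases n with _ | n
    · rw [hF0]; exact integrable_zero _ _ _
    · exact (((integrableOn_pow_exp (c := ((n+1 : ℕ) : ℝ)) (by positivity)).const_mul
        ((n+1 : ℕ) : ℝ)).const_mul _)
  have hF_val : ∀ n : ℕ, ∫ t in Ioi (0:ℝ), F n t
      = (k.factorial : ℝ) * ((-1 : ℝ) ^ (n + 1) * (1 / (n : ℝ) ^ k)) := by
    intro n
    rcases n with _ | n
    · rw [hF0]
      simp [zero_pow (by omega : k ≠ 0)]
    · rw [hF]
      simp only [integral_const_mul]
      rw [integral_pow_exp (c := ((n+1 : ℕ) : ℝ)) (by positivity)]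
      have h1 : ((n+1 : ℕ) : ℝ) ≠ 0 := by positivity
      field_simp
      ring
  have hF_norm : ∀ n : ℕ, ∫ t in Ioi (0:ℝ), ‖F n t‖
      = (k.factorial : ℝ) * (1 / (n : ℝ) ^ k) := by
    intro n
    rcases n with _ | n
    · rw [hF0]
      simp [zero_pow (by omega : k ≠ 0)]
    · have : ∀ t ∈ Ioi (0:ℝ), ‖F (n+1) t‖
          = ((n+1 : ℕ) : ℝ) * (t ^ k * Real.exp (-((n+1 : ℕ) * t))) := by
        intro t ht
        rw [hF]
        simp only [Real.norm_eq_abs, abs_mul, abs_pow, abs_neg, abs_one, one_pow, one_mul]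
        rw [abs_of_pos (Real.exp_pos _), abs_of_pos (show 0 < t from ht), Nat.abs_cast]
      rw [setIntegral_congr_fun measurableSet_Ioi this, integral_const_mul,
        integral_pow_exp (by positivity)]
      have h1 : ((n+1 : ℕ) : ℝ) ≠ 0 := by positivity
      field_simp
      ring
  have hsum : Summable fun n : ℕ => ∫ t in Ioi (0:ℝ), ‖F n t‖ := by
    simp only [hF_norm]
    exact hζ.summable.mul_left _
  have hswap := MeasureTheory.integral_tsum_of_summable_integral_norm hF_int hsum
  have hrhs : ∫ t in Ioi (0:ℝ), (∑' n, F n t) = ∫ t in Ioi (0:ℝ), t ^ k * w t := by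
    refine setIntegral_congr_fun measurableSet_Ioi (fun t ht => ?_)
    have hs := (hasSum_w ht).mul_left (t ^ k)
    have heq : ∀ n : ℕ, F n t = t ^ k * ((-1 : ℝ) ^ (n + 1) * ((n : ℝ) * Real.exp (-(n * t)))) := by
      intro n; rw [hF]; ring
    rw [tsum_congr heq, hs.tsum_eq]
  rw [hrhs] at hswap
  rw [← hswap]
  calc ∑' n, ∫ t in Ioi (0:ℝ), F n t
      = ∑' n : ℕ, (k.factorial : ℝ) * ((-1 : ℝ) ^ (n + 1) * (1 / (n : ℝ) ^ k)) :=
        tsum_congr hF_val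
    _ = k.factorial * ((1 - 2 / 2 ^ k) * S) := ((hasSum_eta hζ).mul_left _).tsum_eq

lemma integral_sq_w : ∫ t in Ioi (0:ℝ), t ^ 2 * w t = π ^ 2 / 6 := by
  rw [integral_pow_w (by norm_num) hasSum_zeta_two]
  norm_num
  ring

lemma integral_four_w : ∫ t in Ioi (0:ℝ), t ^ 4 * w t = 7 * π ^ 4 / 30 := by
  rw [integral_pow_w (by norm_num) hasSum_zeta_four]
  norm_num [Nat.factorial]
  ring

end SCB

lemma C₂_pos (α : ℝ) : 0 < C₂ α := by
  unfold C₂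
  have := Real.pi_pos
  positivity

lemma g₁_eq (z α : ℝ) :
    g₁ z α = (4 + 8 * α ^ 2 * z ^ 2 + α ^ 4 * z ^ 4) * SCB.w z / C₂ α := by
  unfold g₁ SCB.w
  have h1 : C₂ α ≠ 0 := (C₂_pos α).ne'
  have h2 : (1 + Real.exp (-z)) ^ 2 ≠ 0 := by positivity
  field_simp

theorem SCBASLG2_density (α : ℝ) :
    (∀ z : ℝ, 0 ≤ g₁ z α) ∧ (∫ z : ℝ, g₁ z α) = 1 ∧ (∀ z : ℝ, g₁ (-z) α = g₁ z α) := by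
  have hsymm : ∀ z : ℝ, g₁ (-z) α = g₁ z α := by
    intro z
    rw [g₁_eq, g₁_eq, SCB.w_even]
    ring
  refine ⟨fun z => ?_, ?_, hsymm⟩
  · rw [g₁_eq]
    have h1 : (0:ℝ) ≤ 4 + 8 * α ^ 2 * z ^ 2 + α ^ 4 * z ^ 4 := by positivity
    exact div_nonneg (mul_nonneg h1 (SCB.w_nonneg z)) (C₂_pos α).le
  · have habs : ∀ z : ℝ, g₁ z α = g₁ |z| α := by
      intro z
      rcases abs_cases z with ⟨h, _⟩ | ⟨h, _⟩
      · rw [h]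
      · rw [h, hsymm]
    have h1 : (∫ z : ℝ, g₁ z α) = ∫ z : ℝ, g₁ |z| α := by
      exact integral_congr_ae (Filter.Eventually.of_forall habs)
    rw [h1, integral_comp_abs (f := fun t => g₁ t α)]
    have h2 : ∀ t : ℝ, g₁ t α
        = (C₂ α)⁻¹ * (4 * SCB.w t + (8 * α ^ 2) * (t ^ 2 * SCB.w t)
            + α ^ 4 * (t ^ 4 * SCB.w t)) := by
      intro t
      rw [g₁_eq]
      ring
    rw [setIntegral_congr_fun measurableSet_Ioi (fun t _ => h2 t)]
    rw [integral_const_mul]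
    have i0 : IntegrableOn (fun t : ℝ => 4 * SCB.w t) (Ioi 0) := by
      refine ((SCB.integrableOn_pow_w 0).congr_fun (fun t _ => by simp)
        measurableSet_Ioi).const_mul 4
    have i2 : IntegrableOn (fun t : ℝ => (8 * α ^ 2) * (t ^ 2 * SCB.w t)) (Ioi 0) :=
      (SCB.integrableOn_pow_w 2).const_mul _
    have i4 : IntegrableOn (fun t : ℝ => α ^ 4 * (t ^ 4 * SCB.w t)) (Ioi 0) :=
      (SCB.integrableOn_pow_w 4).const_mul _
    have i02 : IntegrableOn (fun t : ℝ => 4 * SCB.w t + (8 * α ^ 2) * (t ^ 2 * SCB.w t))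
        (Ioi 0) := i0.add i2
    rw [integral_add i02 i4, integral_add i0 i2, integral_const_mul,
      integral_const_mul, integral_const_mul]
    have hw0 : ∫ t in Ioi (0:ℝ), SCB.w t = 1 / 2 := SCB.integral_w_Ioi
    rw [hw0, SCB.integral_sq_w, SCB.integral_four_w]
    have hC := (C₂_pos α).ne'
    unfold C₂ at *
    field_simp
    ring
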